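/- Let M be a finite simple matroid of rank k on n elements whose dual matroid M* is also simple. Write χ_M(S,T) = Σ_{i=0}^n χ_i(T) S^i for the coboundary polynomial of M. Then the coboundary polynomial of M* satisfies the polynomial identity T^k · χ_{M*}(S,T) = Σ_{i=0}^n χ_i(T) · (S + T − 1)^i · (S − 1)^{n−i} (equivalently, χ_{M*}(S,T) = (S−1)^n T^{−k} χ_M((S+T−1)/(S−1), T)). -/

import Mathlib

open Matroid Polynomial Finset
open scoped Classical

namespace PaperMatroid

variable {α : Type*}

/-- The rank of a finset in a matroid on a finite type: the maximum size of an
independent subset. -/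
noncomputable def mrk [Fintype α] (M : Matroid α) (x : Finset α) : ℕ :=
  (x.powerset.filter (fun (I : Finset α) => M.Indep (I : Set α))).sup Finset.card

/-- A circuit of a matroid: a minimal dependent set. -/
def IsCircuit (M : Matroid α) (C : Set α) : Prop :=
  M.Dep C ∧ ∀ ⦃D⦄, D ⊂ C → M.Indep D

/-- The girth of a matroid: the minimum size of a circuit. -/
noncomputable def girth (M : Matroid α) : ℕ :=
  sInf {n | ∃ C, IsCircuit M C ∧ C.ncard = n}

/-- The cogirth of a matroid: the girth of the dual matroid, i.e. the minimum
size of a cocircuit. -/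
noncomputable def cogirth (M : Matroid α) : ℕ := girth M✶

/-- The finset of (finsets corresponding to) flats of a matroid on a finite type. -/
noncomputable def flats [Fintype α] (M : Matroid α) : Finset (Finset α) :=
  Finset.univ.filter fun F => M.IsFlat ↑F

/-- The Möbius function of the lattice of flats of a matroid:
`μ(X,X) = 1`, `μ(X,Y) = -Σ_{X ⊆ Z ⊊ Y, Z a flat} μ(X,Z)` for `X ⊊ Y`, and `0` otherwise. -/
noncomputable def mob [Fintype α] (M : Matroid α) (X Y : Finset α) : ℤ :=
  if X = Y then 1
  else if X ⊆ Y then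
    -∑ Z ∈ ((flats M).filter fun Z => X ⊆ Z ∧ Z ⊂ Y).attach, mob M X Z.1
  else 0
termination_by Y.card
decreasing_by
  · have hZ := Z.2
    simp only [Finset.mem_filter] at hZ
    exact Finset.card_lt_card hZ.2.2

/-- The Möbius polynomial of a matroid, as a polynomial in `S` (the outer
variable) whose coefficients are polynomials in `T` (the inner variable):
`μ_M(S,T) = Σ_{x ∈ L} Σ_{x ⊆ y ∈ L} μ(x,y) S^{r(x)} T^{k - r(y)}`,
where `L` is the lattice of flats and `k` is the rank of `M`. -/
noncomputable def mobiusPoly [Fintype α] (M : Matroid α) : Polynomial (Polynomial ℤ) :=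
  ∑ x ∈ flats M, ∑ y ∈ (flats M).filter (fun y => x ⊆ y),
    mob M x y • (Polynomial.X ^ (mrk M x) *
      Polynomial.C (Polynomial.X ^ (mrk M Finset.univ - mrk M y)))

/-- The coboundary polynomial of a matroid, as a polynomial in `S` (the outer
variable) whose coefficients are polynomials in `T` (the inner variable):
`χ_M(S,T) = Σ_{x ∈ L} Σ_{x ⊆ y ∈ L} μ(x,y) S^{|x|} T^{k - r(y)}`,
where `L` is the lattice of flats, `|x|` is the number of ground-set elements
of the flat `x`, and `k` is the rank of `M`. -/
noncomputable def cobPoly [Fintype α] (M : Matroid α) : Polynomial (Polynomial ℤ) :=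
  ∑ x ∈ flats M, ∑ y ∈ (flats M).filter (fun y => x ⊆ y),
    mob M x y • (Polynomial.X ^ x.card *
      Polynomial.C (Polynomial.X ^ (mrk M Finset.univ - mrk M y)))

section Rank
variable [Fintype α] {M : Matroid α}

lemma le_mrk {S : Set α} {A : Finset α} (hS : M.Indep S) (hSA : S ⊆ ↑A) :
    S.ncard ≤ mrk M A := by
  classical
  have hfin : S.Finite := Set.toFinite S
  have hmem : hfin.toFinset ∈ A.powerset.filter (fun I : Finset α => M.Indep (I : Set α)) := by
    simp only [Finset.mem_filter, Finset.mem_powerset]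
    constructor
    · intro x hx
      have := hfin.mem_toFinset.mp hx
      exact hSA this
    · rwa [Set.Finite.coe_toFinset]
  have := Finset.le_sup (f := Finset.card) hmem
  rwa [Set.ncard_eq_toFinset_card' S, Set.toFinset_card, ← Set.Finite.card_toFinset hfin] at *
  
lemma mrk_eq_of_basis (hE : M.E = Set.univ) {I : Set α} {A : Finset α}
    (hI : M.IsBasis I ↑A) : mrk M A = I.ncard := by
  classical
  refine le_antisymm (Finset.sup_le ?_) (le_mrk hI.indep hI.subset)
  intro J hJ
  simp only [Finset.mem_filter, Finset.mem_powerset] at hJ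
  obtain ⟨hJA, hJind⟩ := hJ
  -- extend J to a basis I' of A
  obtain ⟨I', hI', hJI'⟩ := hJind.subset_isBasis_of_subset
    (by exact_mod_cast Finset.coe_subset.mpr hJA) (by rw [hE]; exact Set.subset_univ _)
  have hcard : I'.ncard = I.ncard := by
    have h1 : (M ↾ (↑A : Set α)).IsBase I' := hI'.isBase_restrict
    have h2 : (M ↾ (↑A : Set α)).IsBase I := hI.isBase_restrict
    exact h1.ncard_eq_ncard_of_isBase h2
  calc J.card = (↑J : Set α).ncard := by rw [Set.ncard_coe_finset]
    _ ≤ I'.ncard := Set.ncard_le_ncard hJI' (Set.toFinite I')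
    _ = I.ncard := hcard

lemma mrk_mono {A B : Finset α} (h : A ⊆ B) : mrk M A ≤ mrk M B :=
  Finset.sup_mono (Finset.filter_subset_filter _ (Finset.powerset_mono.mpr h))

lemma mrk_empty (M : Matroid α) : mrk M (∅ : Finset α) = 0 := by
  classical
  refine Nat.le_antisymm (Finset.sup_le ?_) (Nat.zero_le _)
  intro J hJ
  simp only [Finset.mem_filter, Finset.mem_powerset, Finset.subset_empty] at hJ
  simp [hJ.1]

end Rank
section Fcl
variable [Fintype α] {M : Matroid α}

lemma flat_closure (M : Matroid α) (X : Set α) : M.IsFlat (M.closure X) := by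
  rw [Matroid.closure_eq_subtypeClosure]
  exact (Matroid.isClosed_iff_isFlat).mp (M.subtypeClosure.isClosed_closure _)

/-- Closure of a finset, as a finset. -/
noncomputable def fcl (M : Matroid α) (A : Finset α) : Finset α :=
  (M.closure ↑A).toFinset

lemma coe_fcl (M : Matroid α) (A : Finset α) : (↑(fcl M A) : Set α) = M.closure ↑A := by
  simp [fcl]

lemma fcl_mem_flats (M : Matroid α) (A : Finset α) : fcl M A ∈ flats M := by
  simp only [flats, Finset.mem_filter, Finset.mem_univ, true_and, coe_fcl]
  exact flat_closure M ↑A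

lemma mem_flats_iff {F : Finset α} : F ∈ flats M ↔ M.IsFlat ↑F := by
  simp [flats]

lemma subset_fcl (hE : M.E = Set.univ) (A : Finset α) : A ⊆ fcl M A := by
  intro x hx
  have : (↑A : Set α) ⊆ M.closure ↑A :=
    M.subset_closure ↑A (by rw [hE]; exact Set.subset_univ _)
  simpa [fcl] using this hx

lemma fcl_subset_iff (hE : M.E = Set.univ) {A F : Finset α} (hF : M.IsFlat ↑F) :
    fcl M A ⊆ F ↔ A ⊆ F := by
  constructor
  · intro h
    exact (subset_fcl hE A).trans h
  · intro h
    have h1 : M.closure ↑A ⊆ M.closure ↑F := M.closure_subset_closure (by exact_mod_cast h)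
    rw [hF.closure] at h1
    intro x hx
    have : x ∈ M.closure ↑A := by simpa [fcl] using hx
    exact_mod_cast h1 this

lemma mrk_fcl (hE : M.E = Set.univ) (A : Finset α) : mrk M (fcl M A) = mrk M A := by
  obtain ⟨I, hI⟩ := M.exists_isBasis ↑A (by rw [hE]; exact Set.subset_univ _)
  rw [mrk_eq_of_basis hE hI]
  have : M.IsBasis I (M.closure ↑A) := hI.isBasis_closure_right
  rw [← coe_fcl] at this
  rw [mrk_eq_of_basis hE this]

end Fcl
set_option linter.unusedSectionVars false
section Mob
variable [Fintype α] {M : Matroid α}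

lemma mob_self (M : Matroid α) (X : Finset α) : mob M X X = 1 := by
  rw [mob]; simp

lemma mob_of_not_subset {X Y : Finset α} (h : ¬ X ⊆ Y) : mob M X Y = 0 := by
  rw [mob, if_neg, if_neg h]
  rintro rfl; exact h Finset.Subset.rfl

lemma sum_mob_right {X Y : Finset α} (hXY : X ⊆ Y) (hY : Y ∈ flats M) :
    ∑ Z ∈ (flats M).filter (fun Z => X ⊆ Z ∧ Z ⊆ Y), mob M X Z
      = if X = Y then 1 else 0 := by
  by_cases hxy : X = Y
  · subst hxy
    rw [if_pos rfl]
    have : (flats M).filter (fun Z => X ⊆ Z ∧ Z ⊆ X) = {X} := by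
      ext Z
      simp only [Finset.mem_filter, Finset.mem_singleton]
      constructor
      · rintro ⟨-, h1, h2⟩; exact Finset.Subset.antisymm h2 h1
      · rintro rfl; exact ⟨hY, Finset.Subset.rfl, Finset.Subset.rfl⟩
    rw [this, Finset.sum_singleton, mob_self]
  · rw [if_neg hxy]
    have hYmem : Y ∈ (flats M).filter (fun Z => X ⊆ Z ∧ Z ⊆ Y) := by
      simp only [Finset.mem_filter]
      exact ⟨hY, hXY, Finset.Subset.rfl⟩
    rw [← Finset.add_sum_erase _ _ hYmem]
    have herase : ((flats M).filter (fun Z => X ⊆ Z ∧ Z ⊆ Y)).erase Y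
        = (flats M).filter (fun Z => X ⊆ Z ∧ Z ⊂ Y) := by
      ext Z
      simp only [Finset.mem_erase, Finset.mem_filter]
      constructor
      · rintro ⟨hne, hfl, h1, h2⟩
        exact ⟨hfl, h1, lt_of_le_of_ne h2 hne⟩
      · rintro ⟨hfl, h1, h2⟩
        exact ⟨ne_of_lt h2, hfl, h1, h2.subset⟩
    rw [herase]
    have hmobXY : mob M X Y =
        -∑ Z ∈ ((flats M).filter fun Z => X ⊆ Z ∧ Z ⊂ Y).attach, mob M X Z.1 := by
      rw [mob]; rw [if_neg hxy, if_pos hXY]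
    rw [hmobXY, ← Finset.sum_attach ((flats M).filter fun Z => X ⊆ Z ∧ Z ⊂ Y)
      (fun Z => mob M X Z)]
    ring

lemma sum_mob_left {A B : Finset α} (hA : A ∈ flats M) (hB : B ∈ flats M) :
    ∑ x ∈ (flats M).filter (fun x => A ⊆ x), mob M x B
      = if A = B then 1 else 0 := by
  classical
  set p : Finset α → Prop := fun F => F ∈ flats M with hp
  set Z : Matrix (Subtype p) (Subtype p) ℤ := fun a b => if a.1 ⊆ b.1 then 1 else 0 with hZdef
  set U : Matrix (Subtype p) (Subtype p) ℤ := fun a b => mob M a.1 b.1 with hUdef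
  have hmem : ∀ x, x ∈ flats M ↔ p x := fun x => Iff.rfl
  have hUZ : U * Z = 1 := by
    ext a b
    rw [Matrix.mul_apply, Matrix.one_apply]
    have step1 : ∑ c, U a c * Z c b
        = ∑ F ∈ flats M, (if a.1 ⊆ F ∧ F ⊆ b.1 then mob M a.1 F else 0) := by
      rw [Finset.sum_subtype (flats M) hmem
        (fun F => if a.1 ⊆ F ∧ F ⊆ b.1 then mob M a.1 F else 0)]
      apply Finset.sum_congr rfl
      intro c _
      rw [hUdef, hZdef]
      by_cases h1 : c.1 ⊆ b.1 <;> by_cases h2 : a.1 ⊆ c.1 <;>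
        simp [h1, h2, mob_of_not_subset]
    rw [step1, ← Finset.sum_filter]
    by_cases hab : a.1 ⊆ b.1
    · rw [sum_mob_right hab b.2]
      by_cases h : a = b
      · subst h; simp
      · rw [if_neg h, if_neg (fun h' => h (Subtype.ext h'))]
    · have hemp : (flats M).filter (fun F => a.1 ⊆ F ∧ F ⊆ b.1) = ∅ := by
        rw [Finset.filter_eq_empty_iff]
        rintro F _ ⟨h1, h2⟩
        exact hab (h1.trans h2)
      have hne : a ≠ b := by rintro rfl; exact hab Finset.Subset.rfl
      rw [hemp, Finset.sum_empty, if_neg hne]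
  have hZU : Z * U = 1 := mul_eq_one_comm.mp hUZ
  have key := congrFun (congrFun hZU ⟨A, hA⟩) ⟨B, hB⟩
  rw [Matrix.mul_apply, Matrix.one_apply] at key
  have step2 : ∑ c, Z ⟨A, hA⟩ c * U c ⟨B, hB⟩
      = ∑ F ∈ flats M, (if A ⊆ F then mob M F B else 0) := by
    rw [Finset.sum_subtype (flats M) hmem (fun F => if A ⊆ F then mob M F B else 0)]
    apply Finset.sum_congr rfl
    intro c _
    rw [hUdef, hZdef]
    by_cases h1 : A ⊆ c.1 <;> simp [h1]
  rw [step2] at key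
  rw [← Finset.sum_filter] at key
  rw [key]
  simp [Subtype.ext_iff]

end Mob
section LemA
variable [Fintype α] {M : Matroid α}

lemma cobPoly_eq (hE : M.E = Set.univ) :
    cobPoly M = ∑ A : Finset α, (Polynomial.X - 1 : Polynomial (Polynomial ℤ)) ^ A.card *
      Polynomial.C (Polynomial.X ^ (mrk M Finset.univ - mrk M A)) := by
  classical
  set k := mrk M Finset.univ with hk
  set T : Finset α → Polynomial (Polynomial ℤ) :=
    fun y => Polynomial.C (Polynomial.X ^ (k - mrk M y)) with hT
  have hXpow : ∀ x ∈ flats M, (X : Polynomial (Polynomial ℤ)) ^ x.card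
      = ∑ A : Finset α, if fcl M A ⊆ x then (X - 1 : Polynomial (Polynomial ℤ)) ^ A.card else 0 := by
    intro x hx
    have h2 := Finset.sum_pow_mul_eq_add_pow (X - 1 : Polynomial (Polynomial ℤ)) 1 x
    simp only [one_pow, mul_one, sub_add_cancel] at h2
    have hps : x.powerset = Finset.univ.filter (fun A => fcl M A ⊆ x) := by
      ext A
      simp [Finset.mem_powerset, fcl_subset_iff hE (mem_flats_iff.mp hx)]
    rw [← h2, hps, Finset.sum_filter]
  calc cobPoly M
      = ∑ x ∈ flats M, ∑ y ∈ flats M,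
          mob M x y • ((X : Polynomial (Polynomial ℤ)) ^ x.card * T y) := by
        rw [cobPoly]
        refine Finset.sum_congr rfl (fun x _ => ?_)
        refine Finset.sum_filter_of_ne ?_
        intro y _ hne
        by_contra hsub
        rw [mob_of_not_subset hsub, zero_smul] at hne
        exact hne rfl
    _ = ∑ y ∈ flats M, ∑ x ∈ flats M,
          mob M x y • ((X : Polynomial (Polynomial ℤ)) ^ x.card * T y) := Finset.sum_comm
    _ = ∑ y ∈ flats M, ∑ A : Finset α,
          (if fcl M A = y then (1 : ℤ) else 0) •
            ((X - 1 : Polynomial (Polynomial ℤ)) ^ A.card * T y) := by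
        refine Finset.sum_congr rfl (fun y hy => ?_)
        calc ∑ x ∈ flats M, mob M x y • ((X : Polynomial (Polynomial ℤ)) ^ x.card * T y)
            = ∑ x ∈ flats M, ∑ A : Finset α, (if fcl M A ⊆ x then
                mob M x y • ((X - 1 : Polynomial (Polynomial ℤ)) ^ A.card * T y) else 0) := by
              refine Finset.sum_congr rfl (fun x hx => ?_)
              rw [hXpow x hx, Finset.sum_mul, Finset.smul_sum]
              refine Finset.sum_congr rfl (fun A _ => ?_)
              by_cases h : fcl M A ⊆ x <;> simp [h]
          _ = ∑ A : Finset α, ∑ x ∈ flats M, (if fcl M A ⊆ x then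
                mob M x y • ((X - 1 : Polynomial (Polynomial ℤ)) ^ A.card * T y) else 0) :=
              Finset.sum_comm
          _ = _ := by
              refine Finset.sum_congr rfl (fun A _ => ?_)
              rw [← Finset.sum_filter, ← Finset.sum_smul,
                sum_mob_left (fcl_mem_flats M A) hy]
    _ = ∑ A : Finset α, ∑ y ∈ flats M,
          (if fcl M A = y then
            (X - 1 : Polynomial (Polynomial ℤ)) ^ A.card * T y else 0) := by
        rw [Finset.sum_comm]
        refine Finset.sum_congr rfl fun A _ => Finset.sum_congr rfl fun y _ => ?_
        by_cases h : fcl M A = y <;> simp [h]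
    _ = ∑ A : Finset α, (X - 1 : Polynomial (Polynomial ℤ)) ^ A.card * T (fcl M A) := by
        refine Finset.sum_congr rfl fun A _ => ?_
        rw [Finset.sum_ite_eq (flats M) (fcl M A)
          (fun y => (X - 1 : Polynomial (Polynomial ℤ)) ^ A.card * T y),
          if_pos (fcl_mem_flats M A)]
    _ = _ := by
        refine Finset.sum_congr rfl fun A _ => ?_
        rw [hT]
        simp only [mrk_fcl hE]

end LemA
section DualRank
variable [Fintype α] {M : Matroid α}

lemma mrk_dual_add (hE : M.E = Set.univ) (A : Finset α) :
    mrk M✶ A + mrk M Finset.univ = A.card + mrk M Aᶜ := by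
  classical
  have hE' : M✶.E = Set.univ := by rw [Matroid.dual_ground]; exact hE
  obtain ⟨I, hI⟩ := M.exists_isBasis (↑(Aᶜ) : Set α) (by rw [hE]; exact Set.subset_univ _)
  obtain ⟨B, hBb, hIB⟩ := hI.indep.subset_isBasis_of_subset hI.indep.subset_ground
  have hB : M.IsBase B := Matroid.isBasis_ground_iff.mp hBb
  have hIeq : I = B ∩ (↑A : Set α)ᶜ := by
    have : I = B ∩ (↑(Aᶜ) : Set α) := by
      refine hI.eq_of_subset_indep (hB.indep.subset Set.inter_subset_left)
        (Set.subset_inter hIB hI.subset) Set.inter_subset_right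
    rwa [Finset.coe_compl] at this
  have hmrkAc : mrk M Aᶜ = I.ncard := mrk_eq_of_basis hE hI
  have hmrkU : mrk M Finset.univ = B.ncard := by
    have hb : M.IsBasis B (↑(Finset.univ : Finset α) : Set α) := by
      rw [Finset.coe_univ, ← hE]; exact hB.isBasis_ground
    exact mrk_eq_of_basis hE hb
  rw [hmrkAc, hmrkU]
  -- arithmetic decompositions
  have hBsplit : ((↑A : Set α) ∩ B).ncard + (B \ (↑A : Set α)).ncard = B.ncard := by
    have := Set.ncard_inter_add_ncard_diff_eq_ncard B (↑A : Set α) (Set.toFinite B)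
    rw [Set.inter_comm] at this
    omega
  have hIdiff : I = B \ (↑A : Set α) := by rw [hIeq, Set.diff_eq]
  refine le_antisymm ?_ ?_
  · -- sup ≤
    have key : ∀ J ∈ (A.powerset.filter (fun I : Finset α => M✶.Indep (I : Set α))),
        J.card + B.ncard ≤ A.card + I.ncard := by
      intro J hJ
      simp only [Finset.mem_filter, Finset.mem_powerset] at hJ
      obtain ⟨hJA, hJind⟩ := hJ
      obtain ⟨B', hB', hdisj⟩ := (Matroid.dual_indep_iff_exists
        (by rw [hE]; exact Set.subset_univ _)).mp hJind
      have hBB' : B.ncard = B'.ncard := hB.ncard_eq_ncard_of_isBase hB'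
      have hAsplit : ((↑A : Set α) ∩ B').ncard + ((↑A : Set α) \ B').ncard = A.card := by
        have := Set.ncard_inter_add_ncard_diff_eq_ncard (↑A : Set α) B' (Set.toFinite _)
        rwa [Set.ncard_coe_finset] at this
      have hB'split : ((↑A : Set α) ∩ B').ncard + (B' \ (↑A : Set α)).ncard = B'.ncard := by
        have := Set.ncard_inter_add_ncard_diff_eq_ncard B' (↑A : Set α) (Set.toFinite B')
        rw [Set.inter_comm] at this
        omega
      have hJle : J.card ≤ ((↑A : Set α) \ B').ncard := by
        rw [← Set.ncard_coe_finset J]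
        refine Set.ncard_le_ncard ?_ (Set.toFinite _)
        intro x hx
        exact ⟨hJA hx, fun hxB => (Set.disjoint_left.mp hdisj hx) hxB⟩
      have hIle : (B' \ (↑A : Set α)).ncard ≤ I.ncard := by
        rw [← hmrkAc]
        refine le_mrk (hB'.indep.subset Set.diff_subset) ?_
        rw [Finset.coe_compl]
        intro x hx
        exact hx.2
      omega
    have hBle : B.ncard ≤ A.card + I.ncard := by
      have h0 := key ∅ (by
        simp only [Finset.mem_filter, Finset.mem_powerset]
        exact ⟨Finset.empty_subset _, by simpa using M✶.empty_indep⟩)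
      simpa using h0
    have h2 : mrk M✶ A ≤ A.card + I.ncard - B.ncard := by
      rw [mrk]
      exact Finset.sup_le fun J hJ => Nat.le_sub_of_add_le (key J hJ)
    omega
  · -- ≥ : the set A \ B is dual-independent
    have hind : M✶.Indep ((↑A : Set α) \ B) := by
      rw [Matroid.dual_indep_iff_exists (by rw [hE]; exact Set.subset_univ _)]
      exact ⟨B, hB, Set.disjoint_left.mpr (fun x hx => hx.2)⟩
    have hle := le_mrk hind (Set.diff_subset)
    have hAsplit : ((↑A : Set α) ∩ B).ncard + ((↑A : Set α) \ B).ncard = A.card := by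
      have := Set.ncard_inter_add_ncard_diff_eq_ncard (↑A : Set α) B (Set.toFinite _)
      rwa [Set.ncard_coe_finset] at this
    have : I.ncard = (B \ (↑A : Set α)).ncard := by rw [hIdiff]
    omega

lemma mrk_dual_univ (hE : M.E = Set.univ) :
    mrk M✶ Finset.univ + mrk M Finset.univ = Fintype.card α := by
  have := mrk_dual_add hE (Finset.univ : Finset α)
  rw [Finset.compl_univ, mrk_empty, Finset.card_univ] at this
  omega

end DualRank
section KeyPoly

lemma keyPoly (a : ℕ) : ∀ n : ℕ, a ≤ n →
    ∑ i ∈ Finset.range (n+1),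
      Polynomial.C (((X - 1 : Polynomial (Polynomial ℤ)) ^ a).coeff i) *
        (X + Polynomial.C Polynomial.X - 1) ^ i * (X - 1) ^ (n - i)
    = (X - 1) ^ (n - a) * (Polynomial.C (Polynomial.X : Polynomial ℤ)) ^ a := by
  induction a with
  | zero =>
    intro n _
    simp only [pow_zero, Polynomial.coeff_one, Nat.sub_zero, mul_one]
    rw [Finset.sum_eq_single 0]
    · simp
    · intro i _ hi
      simp [hi]
    · intro h
      exact absurd (Finset.mem_range.mpr (Nat.succ_pos n)) h
  | succ a ih =>
    intro n han
    obtain ⟨m, rfl⟩ : ∃ m, n = m + 1 := ⟨n - 1, by omega⟩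
    have ham : a ≤ m := by omega
    set P : Polynomial (Polynomial ℤ) := X - 1 with hP
    set Q : Polynomial (Polynomial ℤ) := X + Polynomial.C Polynomial.X - 1 with hQ
    set Tv : Polynomial (Polynomial ℤ) := Polynomial.C Polynomial.X with hTv
    have hsplit : P ^ (a+1) = P ^ a * X - P ^ a := by rw [hP]; ring
    calc ∑ i ∈ Finset.range (m+1+1),
          Polynomial.C ((P ^ (a+1)).coeff i) * Q ^ i * P ^ (m+1-i)
        = (∑ i ∈ Finset.range (m+2),
            Polynomial.C ((P ^ a * X).coeff i) * Q ^ i * P ^ (m+1-i))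
          - ∑ i ∈ Finset.range (m+2),
            Polynomial.C ((P ^ a).coeff i) * Q ^ i * P ^ (m+1-i) := by
          rw [← Finset.sum_sub_distrib]
          refine Finset.sum_congr rfl fun i _ => ?_
          rw [hsplit, Polynomial.coeff_sub, map_sub]
          ring
      _ = Q * (∑ i ∈ Finset.range (m+1),
            Polynomial.C ((P ^ a).coeff i) * Q ^ i * P ^ (m-i))
          - P ^ (m+1-a) * Tv ^ a := by
          congr 1
          · rw [Finset.sum_range_succ']
            rw [Polynomial.coeff_mul_X_zero, map_zero, zero_mul, zero_mul, add_zero]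
            rw [Finset.mul_sum]
            refine Finset.sum_congr rfl fun i _ => ?_
            rw [Polynomial.coeff_mul_X, Nat.succ_sub_succ]
            ring
          · exact ih (m+1) (by omega)
      _ = Q * (P ^ (m-a) * Tv ^ a) - P ^ (m+1-a) * Tv ^ a := by
          rw [ih m ham]
      _ = (Q - P) * (P ^ (m-a) * Tv ^ a) := by
          have : m + 1 - a = (m - a) + 1 := by omega
          rw [this, pow_succ]
          ring
      _ = P ^ (m+1-(a+1)) * Tv ^ (a+1) := by
          have h1 : Q - P = Tv := by rw [hQ, hP, hTv]; ring
          have h2 : m + 1 - (a+1) = m - a := by omega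
          rw [h1, h2, pow_succ]
          ring

end KeyPoly
/-- For a finite simple matroid `M` of rank `k` on `n` elements
with simple dual `M✶`, the coboundary polynomials satisfy
`T^k · χ_{M✶}(S,T) = Σ_{i=0}^n χ_i(T) (S + T - 1)^i (S - 1)^(n-i)`,
i.e. `χ_{M✶}(S,T) = (S-1)^n T^(-k) χ_M((S+T-1)/(S-1), T)`.
Here `S` is the outer variable `Polynomial.X` and `T` is the inner variable
`Polynomial.C Polynomial.X`. -/
theorem cobPoly_dual {α : Type*} [Fintype α] (M : Matroid α)
    (hE : M.E = Set.univ) (n k : ℕ) (hn : n = Fintype.card α)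
    (hk : k = mrk M Finset.univ)
    (hsimple : 2 < girth M) (hdualsimple : 2 < girth M✶) :
    Polynomial.C (Polynomial.X ^ k) * cobPoly M✶ =
      ∑ i ∈ Finset.range (n + 1),
        Polynomial.C ((cobPoly M).coeff i) *
          (Polynomial.X + Polynomial.C Polynomial.X - 1) ^ i *
          (Polynomial.X - 1) ^ (n - i) := by
  classical
  have hE' : M✶.E = Set.univ := by rw [Matroid.dual_ground]; exact hE
  have hks : ∀ B : Finset α, mrk M B ≤ k := fun B => hk ▸ mrk_mono (Finset.subset_univ B)
  have hexp : ∀ A : Finset α, mrk M✶ Finset.univ - mrk M✶ A + k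
      = Aᶜ.card + (k - mrk M Aᶜ) := by
    intro A
    have h1 := mrk_dual_add hE A
    have h2 : mrk M✶ A ≤ mrk M✶ Finset.univ := mrk_mono (Finset.subset_univ A)
    have h3 : mrk M Aᶜ ≤ k := hks _
    have h4 : Aᶜ.card + A.card = Fintype.card α := by
      rw [add_comm]; exact Finset.card_add_card_compl A
    have h5 := mrk_dual_univ (M := M) hE
    rw [← hk] at h1 h5
    omega
  have hcardle : ∀ B : Finset α, B.card ≤ n := fun B => hn ▸ Finset.card_le_univ B
  have hRHS : (∑ i ∈ Finset.range (n + 1),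
        Polynomial.C ((cobPoly M).coeff i) *
          (Polynomial.X + Polynomial.C Polynomial.X - 1) ^ i *
          (Polynomial.X - 1) ^ (n - i))
      = ∑ B : Finset α, Polynomial.C (Polynomial.X ^ (k - mrk M B)) *
          ((Polynomial.X - 1 : Polynomial (Polynomial ℤ)) ^ (n - B.card) *
            (Polynomial.C (Polynomial.X : Polynomial ℤ)) ^ B.card) := by
    rw [cobPoly_eq hE]
    rw [← hk]
    calc _
        = ∑ i ∈ Finset.range (n + 1), ∑ B : Finset α,
            Polynomial.C (((X - 1 : Polynomial (Polynomial ℤ)) ^ B.card).coeff i) *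
              Polynomial.C (Polynomial.X ^ (k - mrk M B)) *
              ((X + Polynomial.C Polynomial.X - 1) ^ i * (X - 1) ^ (n - i)) := by
          refine Finset.sum_congr rfl fun i _ => ?_
          rw [Polynomial.finset_sum_coeff, map_sum, Finset.sum_mul, Finset.sum_mul]
          refine Finset.sum_congr rfl fun B _ => ?_
          rw [Polynomial.coeff_mul_C, map_mul]
          ring
      _ = ∑ B : Finset α, ∑ i ∈ Finset.range (n + 1),
            Polynomial.C (((X - 1 : Polynomial (Polynomial ℤ)) ^ B.card).coeff i) *
              Polynomial.C (Polynomial.X ^ (k - mrk M B)) *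
              ((X + Polynomial.C Polynomial.X - 1) ^ i * (X - 1) ^ (n - i)) :=
          Finset.sum_comm
      _ = ∑ B : Finset α, Polynomial.C (Polynomial.X ^ (k - mrk M B)) *
            ∑ i ∈ Finset.range (n + 1),
              Polynomial.C (((X - 1 : Polynomial (Polynomial ℤ)) ^ B.card).coeff i) *
                (X + Polynomial.C Polynomial.X - 1) ^ i * (X - 1) ^ (n - i) := by
          refine Finset.sum_congr rfl fun B _ => ?_
          rw [Finset.mul_sum]
          refine Finset.sum_congr rfl fun i _ => ?_
          ring
      _ = _ := by
          refine Finset.sum_congr rfl fun B _ => ?_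
          rw [keyPoly B.card n (hcardle B)]
  rw [hRHS, cobPoly_eq hE', Finset.mul_sum]
  calc ∑ A : Finset α, Polynomial.C (Polynomial.X ^ k) *
        ((X - 1 : Polynomial (Polynomial ℤ)) ^ A.card *
          Polynomial.C (Polynomial.X ^ (mrk M✶ Finset.univ - mrk M✶ A)))
      = ∑ A : Finset α, (X - 1 : Polynomial (Polynomial ℤ)) ^ A.card *
          Polynomial.C (Polynomial.X ^ (Aᶜ.card + (k - mrk M Aᶜ))) := by
        refine Finset.sum_congr rfl fun A _ => ?_
        rw [← hexp A, pow_add, map_mul]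
        ring
    _ = ∑ B : Finset α, (X - 1 : Polynomial (Polynomial ℤ)) ^ Bᶜ.card *
          Polynomial.C (Polynomial.X ^ (B.card + (k - mrk M B))) := by
        refine Finset.sum_nbij' (fun A => Aᶜ) (fun B => Bᶜ) ?_ ?_ ?_ ?_ ?_ <;>
          simp [compl_compl]
    _ = _ := by
        refine Finset.sum_congr rfl fun B _ => ?_
        have hc : Bᶜ.card = n - B.card := by rw [hn]; exact Finset.card_compl B
        rw [hc, pow_add, map_mul, map_pow]
        ring

end PaperMatroid
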